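/- Let S be a Hausdorff CLP-compact topological space with a separately continuous semigroup operation which contains a graph inverse semigroup G(E) as a dense subsemigroup. Then for every subset X ⊆ G(E), the closure of X in S is countably compact at X, i.e., every infinite subset of X has an accumulation point in the closure of X in S. -/

import Mathlib

/-! Preamble: graph inverse semigroups and compactness-type properties. -/

namespace GISPaper

variable {V E : Type*}

/-- `IsPathFrom src rng v l` means that the list of edges `l` is composable
and starts at the vertex `v`. -/
def IsPathFrom (src rng : E → V) : V → List E → Prop
  | _, [] => True
  | v, e :: l => src e = v ∧ IsPathFrom src rng (rng e) l

/-- The end vertex of a list of edges starting at the vertex `v`. -/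
def pathEnd (rng : E → V) : V → List E → V
  | v, [] => v
  | _, e :: l => pathEnd rng (rng e) l

theorem pathEnd_append (rng : E → V) (v : V) (l₁ l₂ : List E) :
    pathEnd rng v (l₁ ++ l₂) = pathEnd rng (pathEnd rng v l₁) l₂ := by
  induction l₁ generalizing v with
  | nil => rfl
  | cons e l ih => simpa [pathEnd] using ih (rng e)

theorem isPathFrom_append (src rng : E → V) (v : V) (l₁ l₂ : List E) :
    IsPathFrom src rng v (l₁ ++ l₂) ↔
      IsPathFrom src rng v l₁ ∧ IsPathFrom src rng (pathEnd rng v l₁) l₂ := by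
  induction l₁ generalizing v with
  | nil => simp [IsPathFrom, pathEnd]
  | cons e l ih => simp [IsPathFrom, pathEnd, ih (rng e), and_assoc]

/-- A (directed) path in the graph `(V, E, src, rng)`: a starting vertex together
with a composable list of edges (a path of length zero is just a vertex). -/
structure GPath (src rng : E → V) where
  start : V
  edges : List E
  isPath : IsPathFrom src rng start edges

/-- The range (end vertex) of a path. -/
def GPath.range {src rng : E → V} (p : GPath src rng) : V :=
  pathEnd rng p.start p.edges

/-- The nonzero elements of the graph inverse semigroup: pairs `u v⁻¹` of paths
with `r u = r v`. -/
def GISElem (src rng : E → V) : Type _ :=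
  {p : GPath src rng × GPath src rng // p.1.range = p.2.range}

/-- The graph inverse semigroup over the graph `(V, E, src, rng)`: the nonzero
elements `u v⁻¹` together with a zero element (represented by `none`). -/
def GIS (src rng : E → V) : Type _ := Option (GISElem src rng)

instance {src rng : E → V} : Zero (GIS src rng) :=
  ⟨(none : Option (GISElem src rng))⟩

open Classical in
/-- The multiplication of a graph inverse semigroup:
`u₁v₁⁻¹ · u₂v₂⁻¹ = u₁w v₂⁻¹` if `u₂ = v₁ w`, `u₁v₁⁻¹ · u₂v₂⁻¹ = u₁ (v₂ w)⁻¹` if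
`v₁ = u₂ w`, and `0` otherwise; `0` is absorbing. -/
noncomputable def GIS.mul {src rng : E → V} :
    Option (GISElem src rng) → Option (GISElem src rng) → Option (GISElem src rng)
  | some ⟨(u₁, v₁), h₁⟩, some ⟨(u₂, v₂), h₂⟩ =>
    if h : v₁.start = u₂.start ∧ v₁.edges <+: u₂.edges then
      some ⟨(⟨u₁.start, u₁.edges ++ u₂.edges.drop v₁.edges.length, by
        obtain ⟨hs, t, ht⟩ := h
        have hdrop : u₂.edges.drop v₁.edges.length = t := by
          rw [← ht, List.drop_left]
        have hu₂ := u₂.isPath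
        rw [← ht, isPathFrom_append] at hu₂
        rw [hdrop, isPathFrom_append]
        refine ⟨u₁.isPath, ?_⟩
        have he : pathEnd rng u₁.start u₁.edges = pathEnd rng u₂.start v₁.edges := by
          rw [← hs]; exact h₁
        rw [he]; exact hu₂.2⟩, v₂), by
        show pathEnd rng u₁.start (u₁.edges ++ u₂.edges.drop v₁.edges.length) = v₂.range
        obtain ⟨hs, t, ht⟩ := h
        have hdrop : u₂.edges.drop v₁.edges.length = t := by
          rw [← ht, List.drop_left]
        rw [hdrop, pathEnd_append]
        have he : pathEnd rng u₁.start u₁.edges = pathEnd rng u₂.start v₁.edges := by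
          rw [← hs]; exact h₁
        rw [he, ← pathEnd_append, ht]
        exact h₂⟩
    else if h' : u₂.start = v₁.start ∧ u₂.edges <+: v₁.edges then
      some ⟨(u₁, ⟨v₂.start, v₂.edges ++ v₁.edges.drop u₂.edges.length, by
        obtain ⟨hs, t, ht⟩ := h'
        have hdrop : v₁.edges.drop u₂.edges.length = t := by
          rw [← ht, List.drop_left]
        have hv₁ := v₁.isPath
        rw [← ht, isPathFrom_append] at hv₁
        rw [hdrop, isPathFrom_append]
        refine ⟨v₂.isPath, ?_⟩
        have he : pathEnd rng v₂.start v₂.edges = pathEnd rng v₁.start u₂.edges := by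
          rw [← hs]; exact h₂.symm
        rw [he]; exact hv₁.2⟩), by
        show u₁.range = pathEnd rng v₂.start (v₂.edges ++ v₁.edges.drop u₂.edges.length)
        obtain ⟨hs, t, ht⟩ := h'
        have hdrop : v₁.edges.drop u₂.edges.length = t := by
          rw [← ht, List.drop_left]
        have he : pathEnd rng v₂.start v₂.edges = pathEnd rng v₁.start u₂.edges := by
          rw [← hs]; exact h₂.symm
        rw [hdrop, pathEnd_append, he, ← pathEnd_append, ht]
        exact h₁⟩
    else none
  | _, _ => none

noncomputable instance {src rng : E → V} : Mul (GIS src rng) := ⟨GIS.mul⟩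

theorem GIS.zero_mul {src rng : E → V} (x : GIS src rng) : 0 * x = 0 := rfl

/-- The topology in which every nonzero point is isolated and the open
neighbourhoods of `0` are exactly the cofinite sets containing `0`. -/
def tauC (α : Type*) [Zero α] : TopologicalSpace α where
  IsOpen U := (0 : α) ∈ U → Uᶜ.Finite
  isOpen_univ := by simp
  isOpen_inter U W hU hW h := by
    rw [Set.compl_inter]
    exact (hU h.1).union (hW h.2)
  isOpen_sUnion 𝒮 h h0 := by
    obtain ⟨U, hU, hU0⟩ := h0
    exact (h U hU hU0).subset (Set.compl_subset_compl.mpr (Set.subset_sUnion_of_mem hU))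

/-- A topological space is CLP-compact if every cover by clopen sets has a
finite subcover. -/
def CLPCompact (X : Type*) [TopologicalSpace X] : Prop :=
  ∀ 𝒰 : Set (Set X), (∀ U ∈ 𝒰, IsClopen U) → ⋃₀ 𝒰 = Set.univ →
    ∃ ℱ ⊆ 𝒰, ℱ.Finite ∧ ⋃₀ ℱ = Set.univ

/-- A topological space is countably compact if every infinite subset has an
accumulation point. -/
def CountablyCompactSpace (X : Type*) [TopologicalSpace X] : Prop :=
  ∀ B : Set X, B.Infinite → ∃ x : X, AccPt x (Filter.principal B)

/-- A topological space is feebly compact if every locally finite family of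
nonempty open sets is finite. -/
def FeeblyCompact (X : Type*) [TopologicalSpace X] : Prop :=
  ∀ 𝒰 : Set (Set X), (∀ U ∈ 𝒰, IsOpen U ∧ U.Nonempty) →
    (∀ x : X, ∃ N ∈ nhds x, {U ∈ 𝒰 | (U ∩ N).Nonempty}.Finite) → 𝒰.Finite

/-- The multiplication of the bicyclic monoid on `ℕ × ℕ`. -/
def bicyclicMul (x y : ℕ × ℕ) : ℕ × ℕ :=
  (x.1 + y.1 - min x.2 y.1, x.2 + y.2 - min x.2 y.1)

/-- The multiplication of the semigroup of `X × X`-matrix units (with zero `none`). -/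
def matUnitsMul {X : Type*} [DecidableEq X] :
    Option (X × X) → Option (X × X) → Option (X × X)
  | some (a, b), some (c, d) => if b = c then some (a, d) else none
  | _, _ => none

/-- A cycle based at the vertex `e`: a path of nonzero length from `e` to `e`. -/
def HasCycleAt (src rng : E → V) (e : V) : Prop :=
  ∃ p : GPath src rng, p.edges ≠ [] ∧ p.start = e ∧ p.range = e

end GISPaper

namespace GISPaper

variable {V E : Type*} {src rng : E → V}

/-- trivial path at a vertex -/
def trivP (src rng : E → V) (w : V) : GPath src rng := ⟨w, [], trivial⟩

@[simp] theorem trivP_start (w : V) : (trivP src rng w).start = w := rfl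
@[simp] theorem trivP_edges (w : V) : (trivP src rng w).edges = [] := rfl
@[simp] theorem trivP_range (w : V) : (trivP src rng w).range = w := rfl

theorem GPath.ext' {p q : GPath src rng} (h1 : p.start = q.start)
    (h2 : p.edges = q.edges) : p = q := by
  cases p; cases q; cases h1; cases h2; rfl

/-- the nonzero element `p q⁻¹`. -/
def toE (p q : GPath src rng) (h : p.range = q.range) : GIS src rng := some ⟨(p, q), h⟩

theorem zero_def : (0 : GIS src rng) = none := rfl

theorem toE_ne_zero (p q : GPath src rng) (h) : toE p q h ≠ 0 := by
  simp [toE, zero_def]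
  intro hh; cases hh

theorem toE_eq_iff {p q p' q' : GPath src rng} {h h'} :
    toE p q h = toE p' q' h' ↔ p = p' ∧ q = q' := by
  constructor
  · intro hh
    have h1 := Option.some.inj hh
    have h2 := congrArg Subtype.val h1
    exact ⟨congrArg Prod.fst h2, congrArg Prod.snd h2⟩
  · rintro ⟨rfl, rfl⟩; rfl

theorem toE_congr {p q p' q' : GPath src rng} {h : p.range = q.range}
    {h' : p'.range = q'.range} (h1 : p = p') (h2 : q = q') :
    toE p q h = toE p' q' h' := toE_eq_iff.mpr ⟨h1, h2⟩

theorem some_eta (z : GISElem src rng) : (some z : GIS src rng) = toE z.1.1 z.1.2 z.2 := rfl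

theorem mul_zero' (x : GIS src rng) : x * 0 = 0 := by cases x <;> rfl

theorem split_aux (q m : GPath src rng) (hst : m.start = q.start) (l : List E)
    (hl : m.edges = q.edges ++ l) :
    IsPathFrom src rng q.range l ∧ pathEnd rng q.range l = m.range := by
  have h1 := m.isPath
  rw [hl, hst, isPathFrom_append] at h1
  refine ⟨h1.2, ?_⟩
  show _ = pathEnd rng m.start m.edges
  rw [hl, hst, pathEnd_append]
  rfl

/-- Multiplication, case where the second factor's first path extends the
first factor's second path. -/
theorem mul_extend' (p q b r : GPath src rng) (hpq : p.range = q.range)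
    (hbr : b.range = r.range) (l : List E) (hb1 : b.start = q.start)
    (hb2 : b.edges = q.edges ++ l) :
    ∃ (P : GPath src rng) (hPr : P.range = r.range),
      P.start = p.start ∧ P.edges = p.edges ++ l ∧
      toE p q hpq * toE b r hbr = toE P r hPr := by
  have hcond : q.start = b.start ∧ q.edges <+: b.edges :=
    ⟨hb1.symm, hb2 ▸ List.prefix_append _ _⟩
  obtain ⟨hpf, hre⟩ := split_aux q b hb1 l hb2
  have hpf' : IsPathFrom src rng (pathEnd rng p.start p.edges) l := by
    show IsPathFrom src rng p.range l
    rw [hpq]; exact hpf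
  refine ⟨⟨p.start, p.edges ++ l, (isPathFrom_append src rng p.start p.edges l).mpr
    ⟨p.isPath, hpf'⟩⟩, ?_, rfl, rfl, ?_⟩
  · show pathEnd rng p.start (p.edges ++ l) = r.range
    rw [pathEnd_append]
    show pathEnd rng p.range l = _
    rw [hpq, hre, hbr]
  · show GIS.mul (some ⟨(p, q), hpq⟩) (some ⟨(b, r), hbr⟩) = _
    simp only [GIS.mul]
    rw [dif_pos hcond]
    refine toE_eq_iff.mpr ⟨GPath.ext' rfl ?_, rfl⟩
    show p.edges ++ List.drop q.edges.length b.edges = p.edges ++ l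
    rw [hb2, List.drop_left]

/-- Multiplication, case where the first factor's second path extends the
second factor's first path. -/
theorem mul_shrink' (p b q r : GPath src rng) (hpb : p.range = b.range)
    (hqr : q.range = r.range) (l : List E) (hb1 : b.start = q.start)
    (hb2 : b.edges = q.edges ++ l) :
    ∃ (R : GPath src rng) (hpR : p.range = R.range),
      R.start = r.start ∧ R.edges = r.edges ++ l ∧
      toE p b hpb * toE q r hqr = toE p R hpR := by
  obtain ⟨hpf, hre⟩ := split_aux q b hb1 l hb2
  by_cases hl : l = []
  · subst hl
    rw [List.append_nil] at hb2
    have hcond : b.start = q.start ∧ b.edges <+: q.edges := ⟨hb1, hb2 ▸ List.prefix_rfl⟩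
    refine ⟨r, ?_, rfl, (List.append_nil r.edges).symm, ?_⟩
    · rw [hpb]
      show pathEnd rng b.start b.edges = _
      rw [hb2, hb1]
      exact hqr
    · show GIS.mul (some ⟨(p, b), hpb⟩) (some ⟨(q, r), hqr⟩) = _
      simp only [GIS.mul]
      rw [dif_pos hcond]
      refine toE_eq_iff.mpr ⟨GPath.ext' rfl ?_, rfl⟩
      show p.edges ++ List.drop b.edges.length q.edges = p.edges
      rw [hb2, List.drop_length, List.append_nil]
  · have hc1 : ¬(b.start = q.start ∧ b.edges <+: q.edges) := by
      rintro ⟨-, hpre⟩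
      have h1 := hpre.length_le
      rw [hb2, List.length_append] at h1
      have : l.length ≠ 0 := fun h => hl (List.length_eq_zero_iff.mp h)
      omega
    have hcond : q.start = b.start ∧ q.edges <+: b.edges :=
      ⟨hb1.symm, hb2 ▸ List.prefix_append _ _⟩
    have hpfr : IsPathFrom src rng (pathEnd rng r.start r.edges) l := by
      show IsPathFrom src rng r.range l
      rw [← hqr]; exact hpf
    refine ⟨⟨r.start, r.edges ++ l, (isPathFrom_append src rng r.start r.edges l).mpr
      ⟨r.isPath, hpfr⟩⟩, ?_, rfl, rfl, ?_⟩
    · show _ = pathEnd rng r.start (r.edges ++ l)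
      rw [pathEnd_append]
      show _ = pathEnd rng r.range l
      rw [← hqr, hre, hpb]
    · show GIS.mul (some ⟨(p, b), hpb⟩) (some ⟨(q, r), hqr⟩) = _
      simp only [GIS.mul]
      rw [dif_neg hc1, dif_pos hcond]
      refine toE_eq_iff.mpr ⟨rfl, GPath.ext' rfl ?_⟩
      show r.edges ++ List.drop q.edges.length b.edges = r.edges ++ l
      rw [hb2, List.drop_left]

theorem mul_eq_zero_of (p b q r : GPath src rng) (hpb : p.range = b.range)
    (hqr : q.range = r.range) (hc1 : ¬ b.edges <+: q.edges)
    (hc2 : ¬ q.edges <+: b.edges) :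
    toE p b hpb * toE q r hqr = 0 := by
  show GIS.mul (some ⟨(p, b), hpb⟩) (some ⟨(q, r), hqr⟩) = _
  simp only [GIS.mul]
  rw [dif_neg (fun h => hc1 h.2), dif_neg (fun h => hc2 h.2)]
  rfl

theorem mul_ne_zero_imp {p b q r : GPath src rng} {hpb : p.range = b.range}
    {hqr : q.range = r.range} (hne : toE p b hpb * toE q r hqr ≠ 0) :
    b.start = q.start ∧ (b.edges <+: q.edges ∨ q.edges <+: b.edges) := by
  by_cases c1 : b.start = q.start ∧ b.edges <+: q.edges
  · exact ⟨c1.1, Or.inl c1.2⟩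
  by_cases c2 : q.start = b.start ∧ q.edges <+: b.edges
  · exact ⟨c2.1.symm, Or.inr c2.2⟩
  exfalso
  apply hne
  show GIS.mul (some ⟨(p, b), hpb⟩) (some ⟨(q, r), hqr⟩) = _
  simp only [GIS.mul]
  rw [dif_neg c1, dif_neg c2]
  rfl

theorem mul_form {p b q r : GPath src rng} {hpb : p.range = b.range}
    {hqr : q.range = r.range} (z : GISElem src rng)
    (h : toE p b hpb * toE q r hqr = some z) :
    z.1.1.start = p.start ∧ z.1.2.start = r.start := by
  rw [show toE p b hpb * toE q r hqr =
    GIS.mul (some ⟨(p, b), hpb⟩) (some ⟨(q, r), hqr⟩) from rfl] at h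
  simp only [GIS.mul] at h
  by_cases c1 : b.start = q.start ∧ b.edges <+: q.edges
  · rw [dif_pos c1] at h
    obtain rfl := Option.some.inj h
    exact ⟨rfl, rfl⟩
  rw [dif_neg c1] at h
  by_cases c2 : q.start = b.start ∧ q.edges <+: b.edges
  · rw [dif_pos c2] at h
    obtain rfl := Option.some.inj h
    exact ⟨rfl, rfl⟩
  · rw [dif_neg c2] at h
    exact absurd h (by simp)

/-- The idempotent at a vertex. -/
def eW (src rng : E → V) (w : V) : GIS src rng := toE (trivP src rng w) (trivP src rng w) rfl

/-- The element `p` (a path). -/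
def pelt (p : GPath src rng) : GIS src rng := toE p (trivP src rng p.range) rfl

/-- The element `p⁻¹` (an inverse path). -/
def pinv (p : GPath src rng) : GIS src rng := toE (trivP src rng p.range) p rfl

def lenM : GIS src rng → ℕ
  | some z => z.1.1.edges.length
  | none => 0

def lenN : GIS src rng → ℕ
  | some z => z.1.2.edges.length
  | none => 0

@[simp] theorem lenM_toE (p q : GPath src rng) (h) : lenM (toE p q h) = p.edges.length := rfl
@[simp] theorem lenN_toE (p q : GPath src rng) (h) : lenN (toE p q h) = q.edges.length := rfl

theorem chain_eq (μ ν m n : GPath src rng) (hmn : m.range = n.range)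
    (hm1 : m.start = μ.start) (hn1 : n.start = ν.start)
    (s t : List E) (hms : m.edges = μ.edges ++ s) (hnt : n.edges = ν.edges ++ t) :
    (pelt μ * ((pinv μ * toE m n hmn) * pelt ν)) * pinv ν = toE m n hmn := by
  simp only [pelt, pinv]
  obtain ⟨P₁, h₁r, h₁s, h₁e, heq1⟩ :=
    mul_extend' (trivP src rng μ.range) μ m n rfl hmn s hm1 hms
  rw [heq1]
  obtain ⟨R₂, h₂r, h₂s, h₂e, heq2⟩ := mul_shrink' P₁ n ν (trivP src rng ν.range) h₁r rfl t hn1 hnt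
  rw [heq2]
  obtain ⟨P₃, h₃r, h₃s, h₃e, heq3⟩ :=
    mul_extend' μ (trivP src rng μ.range) P₁ R₂ rfl h₂r P₁.edges h₁s (by simp)
  rw [heq3]
  obtain ⟨R₄, h₄r, h₄s, h₄e, heq4⟩ :=
    mul_shrink' P₃ R₂ (trivP src rng ν.range) ν h₃r rfl R₂.edges h₂s (by simp)
  rw [heq4]
  refine toE_congr (GPath.ext' (h₃s.trans hm1.symm) ?_) (GPath.ext' (h₄s.trans hn1.symm) ?_)
  · rw [h₃e, h₁e, hms]; simp
  · rw [h₄e, h₂e, hnt]; simp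

section Sigma

variable (u v : GPath src rng) (huv : u.range = v.range)

theorem sigma_a : (pinv u * toE u v huv) * pelt v = eW src rng u.range := by
  simp only [pelt, pinv]
  obtain ⟨P₁, h₁r, h₁s, h₁e, heq1⟩ :=
    mul_extend' (trivP src rng u.range) u u v rfl huv [] rfl (by simp)
  rw [heq1]
  obtain ⟨P₂, h₂r, h₂s, h₂e, heq2⟩ :=
    mul_extend' P₁ v v (trivP src rng v.range) h₁r rfl [] rfl (by simp)
  rw [heq2]
  refine toE_congr (GPath.ext' (h₂s.trans h₁s) ?_) (congrArg (trivP src rng) huv.symm)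
  rw [h₂e, h₁e]; simp

theorem sigma_eq_imp (g : GIS src rng) (h : (pinv u * g) * pelt v = eW src rng u.range) :
    ∃ (b c : GPath src rng) (hbc : b.range = c.range) (t : List E),
      g = toE b c hbc ∧ b.start = u.start ∧ c.start = v.start ∧
      u.edges = b.edges ++ t ∧ v.edges = c.edges ++ t := by
  cases g with
  | none =>
    rw [← zero_def, mul_zero', GIS.zero_mul] at h
    exact absurd h.symm (toE_ne_zero _ _ _)
  | some z =>
    rw [some_eta z] at h ⊢
    simp only [pelt, pinv] at h
    have hinner_ne : toE (trivP src rng u.range) u rfl * toE z.1.1 z.1.2 z.2 ≠ 0 := by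
      intro h0
      rw [h0, GIS.zero_mul] at h
      exact toE_ne_zero _ _ _ h.symm
    obtain ⟨hst, hcomp⟩ := mul_ne_zero_imp hinner_ne
    rcases hcomp with hA | hB
    · obtain ⟨l, hl⟩ := hA
      obtain ⟨P₁, h₁r, h₁s, h₁e, heq1⟩ :=
        mul_extend' (trivP src rng u.range) u z.1.1 z.1.2 rfl z.2 l hst.symm hl.symm
      rw [heq1] at h
      have houter_ne : toE P₁ z.1.2 h₁r * toE v (trivP src rng v.range) rfl ≠ 0 := by
        rw [h]; exact toE_ne_zero _ _ _
      obtain ⟨hst2, hcomp2⟩ := mul_ne_zero_imp houter_ne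
      rcases hcomp2 with hA2 | hB2
      · obtain ⟨t, ht⟩ := hA2
        obtain ⟨P₂, h₂r, h₂s, h₂e, heq2⟩ :=
          mul_extend' P₁ z.1.2 v (trivP src rng v.range) h₁r rfl t hst2.symm ht.symm
        rw [heq2] at h
        obtain ⟨hP₂, -⟩ := toE_eq_iff.mp h
        have he : l ++ t = [] := by
          have := congrArg GPath.edges hP₂
          rw [h₂e, h₁e] at this
          simpa using this
        obtain ⟨hl0, ht0⟩ := List.append_eq_nil_iff.mp he
        subst hl0; subst ht0
        exact ⟨z.1.1, z.1.2, z.2, [], rfl, hst.symm, hst2, by simp [← hl], by simp [← ht]⟩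
      · obtain ⟨t, ht⟩ := hB2
        obtain ⟨R₂, h₂r, h₂s, h₂e, heq2⟩ :=
          mul_shrink' P₁ z.1.2 v (trivP src rng v.range) h₁r rfl t hst2 ht.symm
        rw [heq2] at h
        obtain ⟨hP₁, hR₂⟩ := toE_eq_iff.mp h
        have hl0 : l = [] := by
          have := congrArg GPath.edges hP₁
          rw [h₁e] at this
          simpa using this
        have ht0 : t = [] := by
          have := congrArg GPath.edges hR₂
          rw [h₂e] at this
          simpa using this
        subst hl0; subst ht0
        exact ⟨z.1.1, z.1.2, z.2, [], rfl, hst.symm, hst2, by simp [← hl], by simpa using ht⟩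
    · obtain ⟨l, hl⟩ := hB
      obtain ⟨R₁, h₁r, h₁s, h₁e, heq1⟩ :=
        mul_shrink' (trivP src rng u.range) u z.1.1 z.1.2 rfl z.2 l hst hl.symm
      rw [heq1] at h
      have houter_ne : toE (trivP src rng u.range) R₁ h₁r * toE v (trivP src rng v.range) rfl ≠ 0 := by
        rw [h]; exact toE_ne_zero _ _ _
      obtain ⟨hst2, hcomp2⟩ := mul_ne_zero_imp houter_ne
      rcases hcomp2 with hA2 | hB2
      · obtain ⟨t, ht⟩ := hA2
        obtain ⟨P₂, h₂r, h₂s, h₂e, heq2⟩ :=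
          mul_extend' (trivP src rng u.range) R₁ v (trivP src rng v.range) h₁r rfl t
            hst2.symm ht.symm
        rw [heq2] at h
        obtain ⟨hP₂, -⟩ := toE_eq_iff.mp h
        have ht0 : t = [] := by
          have := congrArg GPath.edges hP₂
          rw [h₂e] at this
          simpa using this
        subst ht0
        refine ⟨z.1.1, z.1.2, z.2, l, rfl, hst.symm, h₁s ▸ hst2, by simp [← hl], ?_⟩
        rw [List.append_nil] at ht
        rw [← ht, h₁e]
      · obtain ⟨t, ht⟩ := hB2
        obtain ⟨R₂, h₂r, h₂s, h₂e, heq2⟩ :=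
          mul_shrink' (trivP src rng u.range) R₁ v (trivP src rng v.range) h₁r rfl t hst2 ht.symm
        rw [heq2] at h
        obtain ⟨-, hR₂⟩ := toE_eq_iff.mp h
        have ht0 : t = [] := by
          have := congrArg GPath.edges hR₂
          rw [h₂e] at this
          simpa using this
        subst ht0
        rw [List.append_nil] at ht
        refine ⟨z.1.1, z.1.2, z.2, l, rfl, hst.symm, h₁s ▸ hst2, by simp [← hl], ?_⟩
        rw [ht, h₁e]

theorem sigma_unique {g g' : GIS src rng}
    (hg : (pinv u * g) * pelt v = eW src rng u.range)
    (hg' : (pinv u * g') * pelt v = eW src rng u.range)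
    (hlen : lenM g = lenM g') : g = g' := by
  obtain ⟨b, c, hbc, t, rfl, hbs, hcs, hu, hv⟩ := sigma_eq_imp u v g hg
  obtain ⟨b', c', hbc', t', rfl, hbs', hcs', hu', hv'⟩ := sigma_eq_imp u v g' hg'
  simp only [lenM_toE] at hlen
  obtain ⟨hb, ht⟩ := List.append_inj (hu.symm.trans hu') hlen
  subst ht
  have hc : c.edges = c'.edges := (List.append_inj' (hv.symm.trans hv') rfl).1
  exact toE_congr (GPath.ext' (hbs.trans hbs'.symm) hb) (GPath.ext' (hcs.trans hcs'.symm) hc)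

theorem sigma_fiber_finite :
    {g : GIS src rng | (pinv u * g) * pelt v = eW src rng u.range}.Finite := by
  classical
  set T := {g : GIS src rng | (pinv u * g) * pelt v = eW src rng u.range} with hT
  have hsub : T ⊆ (fun k => if h : ∃ g ∈ T, lenM g = k then h.choose else 0) ''
      Set.Iic u.edges.length := by
    intro g hg
    have hk : lenM g ≤ u.edges.length := by
      obtain ⟨b, c, hbc, t, rfl, -, -, hu, -⟩ := sigma_eq_imp u v g hg
      rw [lenM_toE, hu, List.length_append]
      omega
    refine ⟨lenM g, hk, ?_⟩
    have hex : ∃ g' ∈ T, lenM g' = lenM g := ⟨g, hg, rfl⟩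
    show (if h : ∃ g' ∈ T, lenM g' = lenM g then h.choose else (0 : GIS src rng)) = g
    rw [dif_pos hex]
    exact sigma_unique u v hex.choose_spec.1 hg hex.choose_spec.2
  exact ((Set.finite_Iic _).image _).subset hsub

end Sigma

end GISPaper

namespace GISPaper

open Filter Topology

variable {V E : Type*} {src rng : E → V}

theorem eW_ne_zero (w : V) : eW src rng w ≠ 0 := toE_ne_zero _ _ _

theorem ultra_nat {α : Type*} (𝒲 : Ultrafilter α) (f : α → ℕ) :
    (∃ k, ∀ᶠ x in ↑𝒲, f x = k) ∨ ∀ L, ∀ᶠ x in ↑𝒲, L < f x := by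
  by_cases h : ∃ k, ∀ᶠ x in ↑𝒲, f x = k
  · exact Or.inl h
  · push_neg at h
    have hk : ∀ k, ∀ᶠ x in ↑𝒲, f x ≠ k := fun k => h k
    refine Or.inr fun L => ?_
    induction L with
    | zero => filter_upwards [hk 0] with x hx; omega
    | succ n ih => filter_upwards [ih, hk (n + 1)] with x h1 h2; omega

section Topo

variable {S : Type*} [TopologicalSpace S] [T2Space S] [Mul S] {ι : GIS src rng → S}

theorem tend_mulL (hsep : ∀ a : S, Continuous (fun x => a * x) ∧ Continuous (fun x => x * a))
    (hhom : ∀ x y : GIS src rng, ι (x * y) = ι x * ι y)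
    {F : Filter (GIS src rng)} (p : GIS src rng) {f : GIS src rng → GIS src rng}
    {t : GIS src rng} (hf : Tendsto (fun y => ι (f y)) F (𝓝 (ι t))) :
    Tendsto (fun y => ι (p * f y)) F (𝓝 (ι (p * t))) := by
  have h1 := ((hsep (ι p)).1.tendsto (ι t)).comp hf
  rw [show (𝓝 (ι (p * t))) = 𝓝 (ι p * ι t) from by rw [hhom]]
  exact h1.congr fun y => (hhom p (f y)).symm

theorem tend_mulR (hsep : ∀ a : S, Continuous (fun x => a * x) ∧ Continuous (fun x => x * a))
    (hhom : ∀ x y : GIS src rng, ι (x * y) = ι x * ι y)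
    {F : Filter (GIS src rng)} (q : GIS src rng) {f : GIS src rng → GIS src rng}
    {t : GIS src rng} (hf : Tendsto (fun y => ι (f y)) F (𝓝 (ι t))) :
    Tendsto (fun y => ι (f y * q)) F (𝓝 (ι (t * q))) := by
  have h1 := ((hsep (ι q)).2.tendsto (ι t)).comp hf
  rw [show (𝓝 (ι (t * q))) = 𝓝 (ι t * ι q) from by rw [hhom]]
  exact h1.congr fun y => (hhom (f y) q).symm

theorem tend_ne (hinj : Function.Injective ι) {F : Filter (GIS src rng)}
    {f : GIS src rng → GIS src rng} {z z' : GIS src rng}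
    (hf : Tendsto (fun y => ι (f y)) F (𝓝 (ι z))) (hz : z' ≠ z) :
    ∀ᶠ y in F, f y ≠ z' := by
  have hne : ι z ∈ ({ι z'}ᶜ : Set S) := fun h => hz (hinj (Set.mem_singleton_iff.mp h)).symm
  have hmem : ({ι z'}ᶜ : Set S) ∈ 𝓝 (ι z) := isClosed_singleton.isOpen_compl.mem_nhds hne
  filter_upwards [hf.eventually (eventually_of_mem hmem fun x hx => hx)] with y hy hc
  exact hy (by rw [hc]; rfl)

theorem tend_uniq (hinj : Function.Injective ι) {F : Filter (GIS src rng)} [F.NeBot]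
    {f : GIS src rng → GIS src rng} {z z' : GIS src rng}
    (h1 : Tendsto (fun y => ι (f y)) F (𝓝 (ι z)))
    (h2 : Tendsto (fun y => ι (f y)) F (𝓝 (ι z'))) : z = z' :=
  hinj (tendsto_nhds_unique h1 h2)

theorem final_step (hsep : ∀ a : S, Continuous (fun x => a * x) ∧ Continuous (fun x => x * a))
    (hinj : Function.Injective ι)
    (hhom : ∀ x y : GIS src rng, ι (x * y) = ι x * ι y)
    (w : V) (𝒲 : Ultrafilter (GIS src rng))
    (hlim : Tendsto (fun y => ι y) (↑𝒲) (𝓝 (ι (eW src rng w))))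
    (μ ν : GPath src rng) (hμs : μ.start = w) (hνs : ν.start = w)
    (hne2 : ¬(μ.edges = [] ∧ ν.edges = []))
    (hEv : ∀ᶠ y in ↑𝒲, (pelt μ * ((pinv μ * y) * pelt ν)) * pinv ν = y) : False := by
  have T1 := tend_mulL hsep hhom (pinv μ) hlim
  have T2 := tend_mulR hsep hhom (pelt ν) T1
  have T3 := tend_mulL hsep hhom (pelt μ) T2
  have T4 := tend_mulR hsep hhom (pinv ν) T3
  have hL : (pelt μ * ((pinv μ * eW src rng w) * pelt ν)) * pinv ν = eW src rng w := by
    refine tend_uniq hinj (f := fun y => y) ?_ hlim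
    exact Tendsto.congr' (hEv.mono fun y hy => congrArg ι hy) T4
  obtain ⟨Ra, hRar, hRas, hRae, heqa⟩ :=
    mul_shrink' (trivP src rng μ.range) μ (trivP src rng w) (trivP src rng w) rfl rfl
      μ.edges hμs (by simp)
  simp only [pelt, pinv, eW] at hL
  rw [heqa] at hL
  by_cases hc1 : μ.edges <+: ν.edges
  · obtain ⟨ρ, hρ⟩ := hc1
    obtain ⟨Pb, hPbr, hPbs, hPbe, heqb⟩ :=
      mul_extend' (trivP src rng μ.range) Ra ν (trivP src rng ν.range) hRar rfl ρ
        (by simp [hνs, hRas]) (by rw [hRae]; simpa using hρ.symm)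
    rw [heqb] at hL
    obtain ⟨Pc, hPcr, hPcs, hPce, heqc⟩ :=
      mul_extend' μ (trivP src rng μ.range) Pb (trivP src rng ν.range) rfl hPbr
        Pb.edges hPbs (by simp)
    rw [heqc] at hL
    obtain ⟨Pd, hPdr, hPds, hPde, heqd⟩ :=
      mul_extend' Pc (trivP src rng ν.range) (trivP src rng ν.range) ν hPcr rfl [] rfl (by simp)
    rw [heqd] at hL
    obtain ⟨-, hν0⟩ := toE_eq_iff.mp hL
    have hν0' : ν.edges = [] := by
      have := congrArg GPath.edges hν0
      simpa using this
    have hμ0 : μ.edges = [] := by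
      have : μ.edges ++ ρ = [] := by rw [hρ, hν0']
      exact (List.append_eq_nil_iff.mp this).1
    exact hne2 ⟨hμ0, hν0'⟩
  by_cases hc2 : ν.edges <+: μ.edges
  · obtain ⟨ρ, hρ⟩ := hc2
    obtain ⟨Rb, hRbr, hRbs, hRbe, heqb⟩ :=
      mul_shrink' (trivP src rng μ.range) Ra ν (trivP src rng ν.range) hRar rfl ρ
        (by simp [hνs, hRas]) (by rw [hRae]; simpa using hρ.symm)
    rw [heqb] at hL
    obtain ⟨Pc, hPcr, hPcs, hPce, heqc⟩ :=
      mul_extend' μ (trivP src rng μ.range) (trivP src rng μ.range) Rb rfl hRbr [] rfl (by simp)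
    rw [heqc] at hL
    obtain ⟨Rd, hRdr, hRds, hRde, heqd⟩ :=
      mul_shrink' Pc Rb (trivP src rng ν.range) ν hPcr rfl Rb.edges hRbs (by simp)
    rw [heqd] at hL
    obtain ⟨hPc0, -⟩ := toE_eq_iff.mp hL
    have hμ0 : μ.edges = [] := by
      have := congrArg GPath.edges hPc0
      rw [hPce] at this
      simpa using this
    have hν0 : ν.edges = [] := by
      have := hρ
      rw [hμ0] at this
      exact (List.append_eq_nil_iff.mp this).1
    exact hne2 ⟨hμ0, hν0⟩
  · have hzero : toE (trivP src rng μ.range) Ra hRar * toE ν (trivP src rng ν.range) rfl = 0 :=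
      mul_eq_zero_of _ _ _ _ _ _ (by rw [hRae]; simpa using hc1) (by rw [hRae]; simpa using hc2)
    rw [hzero, mul_zero', GIS.zero_mul] at hL
    exact toE_ne_zero _ _ _ hL.symm

theorem main_idem (hsep : ∀ a : S, Continuous (fun x => a * x) ∧ Continuous (fun x => x * a))
    (hinj : Function.Injective ι)
    (hhom : ∀ x y : GIS src rng, ι (x * y) = ι x * ι y)
    (w : V) (𝒲 : Ultrafilter (GIS src rng))
    (hlim : Tendsto (fun y => ι y) (↑𝒲) (𝓝 (ι (eW src rng w))))
    (hne : ∀ᶠ y in ↑𝒲, y ≠ eW src rng w)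
    (hform : ∀ᶠ y in ↑𝒲, y ≠ 0 → ∃ (m n : GPath src rng) (hmn : m.range = n.range),
        y = toE m n hmn ∧ m.start = w ∧ n.start = w) : False := by
  have hne0 : ∀ᶠ y in ↑𝒲, y ≠ 0 :=
    tend_ne hinj (f := fun y => y) hlim (Ne.symm (eW_ne_zero w))
  have hform' : ∀ᶠ y in ↑𝒲, ∃ (m n : GPath src rng) (hmn : m.range = n.range),
      y = toE m n hmn ∧ m.start = w ∧ n.start = w ∧ y ≠ eW src rng w := by
    filter_upwards [hform, hne, hne0] with y h1 h2 h3
    obtain ⟨m, n, hmn, hy, hm, hn⟩ := h1 h3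
    exact ⟨m, n, hmn, hy, hm, hn, h2⟩
  have hcomp : ∀ (μ ν : GPath src rng) (hνμ : ν.range = μ.range), μ.start = w → ν.start = w →
      ∀ᶠ y in ↑𝒲, toE ν μ hνμ * y ≠ 0 ∧ y * toE ν μ hνμ ≠ 0 := by
    intro μ ν hνμ hμs hνs
    obtain ⟨R, hRr, -, -, heqL⟩ :=
      mul_shrink' ν μ (trivP src rng w) (trivP src rng w) hνμ rfl μ.edges hμs (by simp)
    have hLt : Tendsto (fun y => ι (toE ν μ hνμ * y)) ↑𝒲 (𝓝 (ι (toE ν R hRr))) := by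
      have h0 := tend_mulL hsep hhom (toE ν μ hνμ) (f := fun y => y) hlim
      rwa [show toE ν μ hνμ * eW src rng w = toE ν R hRr from heqL] at h0
    have hL' := tend_ne hinj hLt (Ne.symm (toE_ne_zero _ _ _))
    obtain ⟨P, hPr, -, -, heqR⟩ :=
      mul_extend' (trivP src rng w) (trivP src rng w) ν μ rfl hνμ ν.edges hνs (by simp)
    have hRt : Tendsto (fun y => ι (y * toE ν μ hνμ)) ↑𝒲 (𝓝 (ι (toE P μ hPr))) := by
      have h0 := tend_mulR hsep hhom (toE ν μ hνμ) (f := fun y => y) hlim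
      rwa [show eW src rng w * toE ν μ hνμ = toE P μ hPr from heqR] at h0
    have hR' := tend_ne hinj hRt (Ne.symm (toE_ne_zero _ _ _))
    filter_upwards [hL', hR'] with y h1 h2
    exact ⟨h1, h2⟩
  rcases ultra_nat 𝒲 lenM with ⟨k₁, hA1⟩ | hB1 <;>
    rcases ultra_nat 𝒲 lenN with ⟨k₂, hA2⟩ | hB2
  · -- both constant
    obtain ⟨g₀, ⟨μ, ν, hμν, hg₀eq, hμs, hνs, hg₀ne⟩, hk1, hk2⟩ :=
      (hform'.and (hA1.and hA2)).exists
    subst hg₀eq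
    simp only [lenM_toE] at hk1
    simp only [lenN_toE] at hk2
    have hconst : ∀ᶠ y in ↑𝒲, y = toE μ ν hμν := by
      filter_upwards [hform', hA1, hA2, hcomp μ ν hμν.symm hμs hνs] with y hy h1 h2 hcc
      obtain ⟨m, n, hmn, rfl, hms, hns, -⟩ := hy
      simp only [lenM_toE] at h1
      simp only [lenN_toE] at h2
      have h3 := mul_ne_zero_imp hcc.1
      have h4 := mul_ne_zero_imp hcc.2
      have hm : m.edges = μ.edges := by
        rcases h3.2 with hp | hp
        · exact (hp.eq_of_length (by omega)).symm
        · exact hp.eq_of_length (by omega)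
      have hn : n.edges = ν.edges := by
        rcases h4.2 with hp | hp
        · exact hp.eq_of_length (by omega)
        · exact (hp.eq_of_length (by omega)).symm
      exact toE_congr (GPath.ext' (hms.trans hμs.symm) hm) (GPath.ext' (hns.trans hνs.symm) hn)
    have hct : Tendsto (fun y => ι y) ↑𝒲 (𝓝 (ι (toE μ ν hμν))) :=
      Tendsto.congr' (hconst.mono fun y hy => (congrArg ι hy).symm) tendsto_const_nhds
    exact hg₀ne (tend_uniq hinj (f := fun y => y) hct hlim)
  · -- lenM constant, lenN unbounded
    obtain ⟨g₀, ⟨μ, ν, hμν, hg₀eq, hμs, hνs, -⟩, hk1, hν1⟩ :=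
      (hform'.and (hA1.and (hB2 0))).exists
    subst hg₀eq
    simp only [lenM_toE] at hk1
    simp only [lenN_toE] at hν1
    have hEv : ∀ᶠ y in ↑𝒲, (pelt μ * ((pinv μ * y) * pelt ν)) * pinv ν = y := by
      filter_upwards [hform', hA1, hB2 ν.edges.length, hcomp μ ν hμν.symm hμs hνs]
        with y hy h1 h2 hcc
      obtain ⟨m, n, hmn, rfl, hms, hns, -⟩ := hy
      simp only [lenM_toE] at h1
      simp only [lenN_toE] at h2
      have h3 := mul_ne_zero_imp hcc.1
      have h4 := mul_ne_zero_imp hcc.2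
      have hm : m.edges = μ.edges ++ [] := by
        rw [List.append_nil]
        rcases h3.2 with hp | hp
        · exact (hp.eq_of_length (by omega)).symm
        · exact hp.eq_of_length (by omega)
      obtain ⟨t, ht⟩ : ν.edges <+: n.edges := by
        rcases h4.2 with hp | hp
        · exact absurd hp.length_le (by omega)
        · exact hp
      exact chain_eq μ ν m n hmn (hms.trans hμs.symm) (hns.trans hνs.symm) [] t hm ht.symm
    exact final_step hsep hinj hhom w 𝒲 hlim μ ν hμs hνs
      (fun hc => by simp [hc.2] at hν1) hEv
  · -- lenM unbounded, lenN constant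
    obtain ⟨g₀, ⟨μ, ν, hμν, hg₀eq, hμs, hνs, -⟩, hμ1, hk2⟩ :=
      (hform'.and ((hB1 0).and hA2)).exists
    subst hg₀eq
    simp only [lenM_toE] at hμ1
    simp only [lenN_toE] at hk2
    have hEv : ∀ᶠ y in ↑𝒲, (pelt μ * ((pinv μ * y) * pelt ν)) * pinv ν = y := by
      filter_upwards [hform', hB1 μ.edges.length, hA2, hcomp μ ν hμν.symm hμs hνs]
        with y hy h1 h2 hcc
      obtain ⟨m, n, hmn, rfl, hms, hns, -⟩ := hy
      simp only [lenM_toE] at h1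
      simp only [lenN_toE] at h2
      have h3 := mul_ne_zero_imp hcc.1
      have h4 := mul_ne_zero_imp hcc.2
      have hn : n.edges = ν.edges ++ [] := by
        rw [List.append_nil]
        rcases h4.2 with hp | hp
        · exact hp.eq_of_length (by omega)
        · exact (hp.eq_of_length (by omega)).symm
      obtain ⟨s, hs⟩ : μ.edges <+: m.edges := by
        rcases h3.2 with hp | hp
        · exact hp
        · exact absurd hp.length_le (by omega)
      exact chain_eq μ ν m n hmn (hms.trans hμs.symm) (hns.trans hνs.symm) s [] hs.symm hn
    exact final_step hsep hinj hhom w 𝒲 hlim μ ν hμs hνs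
      (fun hc => by simp [hc.1] at hμ1) hEv
  · -- both unbounded
    obtain ⟨g₀, ⟨μ, ν, hμν, hg₀eq, hμs, hνs, -⟩, hμ1, hν1⟩ :=
      (hform'.and ((hB1 0).and (hB2 0))).exists
    subst hg₀eq
    simp only [lenM_toE] at hμ1
    simp only [lenN_toE] at hν1
    have hEv : ∀ᶠ y in ↑𝒲, (pelt μ * ((pinv μ * y) * pelt ν)) * pinv ν = y := by
      filter_upwards [hform', hB1 μ.edges.length, hB2 ν.edges.length,
        hcomp μ ν hμν.symm hμs hνs] with y hy h1 h2 hcc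
      obtain ⟨m, n, hmn, rfl, hms, hns, -⟩ := hy
      simp only [lenM_toE] at h1
      simp only [lenN_toE] at h2
      have h3 := mul_ne_zero_imp hcc.1
      have h4 := mul_ne_zero_imp hcc.2
      obtain ⟨s, hs⟩ : μ.edges <+: m.edges := by
        rcases h3.2 with hp | hp
        · exact hp
        · exact absurd hp.length_le (by omega)
      obtain ⟨t, ht⟩ : ν.edges <+: n.edges := by
        rcases h4.2 with hp | hp
        · exact absurd hp.length_le (by omega)
        · exact hp
      exact chain_eq μ ν m n hmn (hms.trans hμs.symm) (hns.trans hνs.symm) s t hs.symm ht.symm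
    exact final_step hsep hinj hhom w 𝒲 hlim μ ν hμs hνs
      (fun hc => by simp [hc.1] at hμ1) hEv

end Topo

end GISPaper

namespace GISPaper

open Filter Topology

variable {V E : Type*} {src rng : E → V}

section Iso

variable {S : Type*} [TopologicalSpace S] [T2Space S] [Mul S] {ι : GIS src rng → S}

set_option linter.unusedSectionVars false

theorem iso_nonzero (hsep : ∀ a : S, Continuous (fun x => a * x) ∧ Continuous (fun x => x * a))
    (hinj : Function.Injective ι)
    (hhom : ∀ x y : GIS src rng, ι (x * y) = ι x * ι y)
    (hdense : DenseRange ι) (u v : GPath src rng) (huv : u.range = v.range) :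
    {ι (toE u v huv)} ∈ 𝓝 (ι (toE u v huv)) := by
  by_contra hiso
  have hkey : ∀ U ∈ 𝓝 (ι (toE u v huv)), ∃ g, ι g ∈ U ∧ g ≠ toE u v huv := by
    intro U hU
    have hVo : IsOpen (interior U \ {ι (toE u v huv)}) :=
      isOpen_interior.sdiff isClosed_singleton
    have hVne : (interior U \ {ι (toE u v huv)}).Nonempty := by
      by_contra hemp
      rw [Set.not_nonempty_iff_eq_empty] at hemp
      apply hiso
      have hsub : interior U ⊆ {ι (toE u v huv)} := by
        intro x hx
        by_contra hxne
        exact Set.eq_empty_iff_forall_notMem.mp hemp x ⟨hx, hxne⟩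
      exact Filter.mem_of_superset
        (isOpen_interior.mem_nhds (mem_interior_iff_mem_nhds.mpr hU)) hsub
    obtain ⟨g, hg⟩ := hdense.exists_mem_open hVo hVne
    exact ⟨g, interior_subset hg.1, fun h => hg.2 (by rw [h]; rfl)⟩
  set F := Filter.comap ι (𝓝 (ι (toE u v huv))) ⊓
    Filter.principal {g | g ≠ toE u v huv} with hF
  have hFne : F.NeBot := by
    constructor
    intro hbot
    have h0 : (∅ : Set (GIS src rng)) ∈ F := by rw [hbot]; exact Filter.mem_bot
    rw [hF, Filter.mem_inf_iff] at h0
    obtain ⟨t₁, ht₁, t₂, ht₂, hE⟩ := h0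
    obtain ⟨U, hU, hsub⟩ := Filter.mem_comap.mp ht₁
    rw [Filter.mem_principal] at ht₂
    obtain ⟨g, hgU, hga⟩ := hkey U hU
    have hmemg : g ∈ t₁ ∩ t₂ := ⟨hsub hgU, ht₂ hga⟩
    rw [← hE] at hmemg
    exact hmemg
  set 𝒱 := Ultrafilter.of F with h𝒱
  have h𝒱le : ↑𝒱 ≤ F := Ultrafilter.of_le F
  have hlim𝒱 : Tendsto (fun g => ι g) ↑𝒱 (𝓝 (ι (toE u v huv))) :=
    Filter.tendsto_iff_comap.mpr (h𝒱le.trans inf_le_left)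
  have hne𝒱 : ∀ᶠ g in ↑𝒱, g ≠ toE u v huv :=
    h𝒱le (Filter.mem_inf_of_right (Filter.mem_principal_self _))
  set Pst := {g : GIS src rng | (pinv u * g) * pelt v = eW src rng u.range} with hPst
  have hPfin : (Pst \ {toE u v huv}).Finite := (sigma_fiber_finite u v).diff
  have hmemc : ι (toE u v huv) ∈ (ι '' (Pst \ {toE u v huv}))ᶜ := by
    rintro ⟨g, ⟨-, hga⟩, hg⟩
    exact hga (hinj hg)
  have hav : ∀ᶠ g in ↑𝒱, g ∉ Pst := by
    have hU : (ι '' (Pst \ {toE u v huv}))ᶜ ∈ 𝓝 (ι (toE u v huv)) :=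
      (hPfin.image ι).isClosed.isOpen_compl.mem_nhds hmemc
    filter_upwards [hlim𝒱.eventually (eventually_of_mem hU fun x hx => hx), hne𝒱]
      with g hg1 hg2 hgP
    exact hg1 ⟨g, ⟨hgP, hg2⟩, rfl⟩
  set 𝒲 := 𝒱.map (fun g => (pinv u * g) * pelt v) with h𝒲
  have hlim𝒲 : Tendsto (fun y => ι y) ↑𝒲 (𝓝 (ι (eW src rng u.range))) := by
    have h1 := tend_mulL hsep hhom (pinv u) (f := fun g => g) hlim𝒱
    have h2 := tend_mulR hsep hhom (pelt v) h1
    rw [show (pinv u * toE u v huv) * pelt v = eW src rng u.range from sigma_a u v huv] at h2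
    rw [h𝒲, Ultrafilter.coe_map]
    exact Filter.tendsto_map'_iff.mpr h2
  have hne𝒲 : ∀ᶠ y in ↑𝒲, y ≠ eW src rng u.range := by
    rw [h𝒲, Ultrafilter.coe_map, Filter.eventually_map]
    filter_upwards [hav] with g hg hc
    exact hg hc
  have hform𝒲 : ∀ᶠ y in ↑𝒲, y ≠ 0 → ∃ (m n : GPath src rng) (hmn : m.range = n.range),
      y = toE m n hmn ∧ m.start = u.range ∧ n.start = u.range := by
    rw [h𝒲, Ultrafilter.coe_map, Filter.eventually_map]
    refine Filter.Eventually.of_forall fun g hne0 => ?_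
    have hinner : pinv u * g ≠ 0 := by
      intro h0
      exact hne0 (by rw [h0, GIS.zero_mul])
    obtain ⟨zg, hgz⟩ : ∃ zg, g = some zg := by
      cases g with
      | none => exact absurd (mul_zero' (pinv u)) hinner
      | some zg => exact ⟨zg, rfl⟩
    have hz₁ : ∃ z₁ : GISElem src rng, pinv u * g = some z₁ := by
      cases hq : pinv u * g with
      | none => exact absurd hq hinner
      | some z₁ => exact ⟨z₁, rfl⟩
    obtain ⟨z₁, hz₁⟩ := hz₁
    have hf1 : z₁.1.1.start = (trivP src rng u.range).start := by
      refine (mul_form (p := trivP src rng u.range) (b := u) (q := zg.1.1) (r := zg.1.2)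
        (hpb := rfl) (hqr := zg.2) z₁ ?_).1
      rw [← hz₁, hgz]
      rfl
    have hz₂ : ∃ z₂ : GISElem src rng, (pinv u * g) * pelt v = some z₂ := by
      cases hq : (pinv u * g) * pelt v with
      | none => exact absurd hq hne0
      | some z₂ => exact ⟨z₂, rfl⟩
    obtain ⟨z₂, hz₂⟩ := hz₂
    have hf2 : z₂.1.1.start = z₁.1.1.start ∧ z₂.1.2.start = (trivP src rng v.range).start := by
      refine mul_form (p := z₁.1.1) (b := z₁.1.2) (q := v) (r := trivP src rng v.range)
        (hpb := z₁.2) (hqr := rfl) z₂ ?_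
      rw [← hz₂, hz₁]
      rfl
    refine ⟨z₂.1.1, z₂.1.2, z₂.2, by rw [hz₂]; rfl, ?_, ?_⟩
    · rw [hf2.1, hf1, trivP_start]
    · rw [hf2.2, trivP_start, huv]
  exact main_idem hsep hinj hhom u.range 𝒲 hlim𝒲 hne𝒲 hform𝒲

end Iso

end GISPaper

open GISPaper in
/-- Let `S` be a Hausdorff CLP-compact space with a separately
continuous (associative) multiplication containing a graph inverse semigroup `G(E)`
as a dense subsemigroup (via the injective multiplicative map `ι`). Then for every
`X ⊆ G(E)`, the closure of `X` in `S` is countably compact at `X`: every infinite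
subset `B` of `X` has an accumulation point in the closure of `X` in `S`. -/
theorem statement3 {V E : Type*} (src rng : E → V)
    {S : Type*} [TopologicalSpace S] [T2Space S] [Mul S]
    (hassoc : ∀ a b c : S, a * b * c = a * (b * c))
    (hsep : ∀ a : S, Continuous (fun x => a * x) ∧ Continuous (fun x => x * a))
    (hCLP : CLPCompact S)
    (ι : GIS src rng → S) (hinj : Function.Injective ι)
    (hhom : ∀ x y : GIS src rng, ι (x * y) = ι x * ι y)
    (hdense : DenseRange ι) :
    ∀ X : Set (GIS src rng), ∀ B ⊆ X, B.Infinite →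
      ∃ s ∈ closure (ι '' X), AccPt s (Filter.principal (ι '' B)) := by
  intro X B hBX hBinf
  by_contra hcon
  push_neg at hcon
  have hno : ∀ s : S, ¬ AccPt s (Filter.principal (ι '' B)) := by
    intro s hs
    have hcl : s ∈ closure (ι '' B) := mem_closure_iff_clusterPt.mpr (AccPt.clusterPt hs)
    exact hcon s (closure_mono (Set.image_mono (f := ι) hBX) hcl) hs
  set B' := B \ {0} with hB'
  have hB'inf : B'.Infinite := hBinf.diff (Set.finite_singleton 0)
  set C : Set S := ι '' B' with hC
  have hCsub : C ⊆ ι '' B := Set.image_mono (f := ι) Set.diff_subset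
  have hCclosed : IsClosed C := by
    apply isClosed_of_closure_subset
    intro s hs
    by_contra hsC
    apply hno s
    rw [accPt_iff_nhds]
    intro U hU
    obtain ⟨y, hyU, hyC⟩ := mem_closure_iff_nhds.mp hs U hU
    exact ⟨y, ⟨hyU, hCsub hyC⟩, fun h => hsC (h ▸ hyC)⟩
  have hsingleton_open : ∀ b ∈ B', IsOpen ({ι b} : Set S) := by
    intro b hb
    obtain ⟨z, rfl⟩ : ∃ z, b = some z := by
      cases b with
      | none => exact absurd rfl hb.2
      | some z => exact ⟨z, rfl⟩
    have hmem := iso_nonzero hsep hinj hhom hdense z.1.1 z.1.2 z.2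
    rw [isOpen_iff_mem_nhds]
    intro a ha
    rw [Set.mem_singleton_iff] at ha
    subst ha
    exact hmem
  have hCopen : IsOpen C := by
    rw [isOpen_iff_mem_nhds]
    rintro s ⟨b, hb, rfl⟩
    exact Filter.mem_of_superset ((hsingleton_open b hb).mem_nhds rfl)
      (Set.singleton_subset_iff.mpr ⟨b, hb, rfl⟩)
  set 𝒰 : Set (Set S) := insert Cᶜ ((fun b => ({ι b} : Set S)) '' B') with h𝒰
  have hclop : ∀ U ∈ 𝒰, IsClopen U := by
    intro U hU
    rcases Set.mem_insert_iff.mp hU with rfl | ⟨b, hb, rfl⟩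
    · exact ⟨hCopen.isClosed_compl, hCclosed.isOpen_compl⟩
    · exact ⟨isClosed_singleton, hsingleton_open b hb⟩
  have hcov : ⋃₀ 𝒰 = Set.univ := by
    apply Set.eq_univ_iff_forall.mpr
    intro s
    by_cases hx : s ∈ C
    · obtain ⟨b, hb, rfl⟩ := hx
      exact ⟨{ι b}, Set.mem_insert_of_mem _ ⟨b, hb, rfl⟩, rfl⟩
    · exact ⟨Cᶜ, Set.mem_insert _ _, hx⟩
  obtain ⟨ℱ, hℱsub, hℱfin, hℱcov⟩ := hCLP 𝒰 hclop hcov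
  set T := {b ∈ B' | ({ι b} : Set S) ∈ ℱ} with hT
  have hTfin : T.Finite := by
    have him : ((fun b => ({ι b} : Set S)) '' T).Finite :=
      hℱfin.subset (by rintro _ ⟨b, hb, rfl⟩; exact hb.2)
    refine Set.Finite.of_finite_image him ?_
    intro b hb b' hb' he
    exact hinj (Set.singleton_eq_singleton_iff.mp he)
  obtain ⟨b, hbB', hbT⟩ : ∃ b ∈ B', b ∉ T := by
    obtain ⟨b, hb⟩ := (hB'inf.diff hTfin).nonempty
    exact ⟨b, hb.1, hb.2⟩
  have hbmem : ι b ∈ ⋃₀ ℱ := hℱcov ▸ Set.mem_univ _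
  obtain ⟨U, hUℱ, hbU⟩ := hbmem
  rcases Set.mem_insert_iff.mp (hℱsub hUℱ) with rfl | ⟨b', hb', rfl⟩
  · exact hbU ⟨b, hbB', rfl⟩
  · have hbb : b = b' := hinj hbU
    exact hbT ⟨hbB', by rw [hbb]; exact hUℱ⟩
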